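/- Consider the labeled chip-firing process on the one-way infinite undirected path on ℕ (edges {i, i+1}): starting from n labeled chips at vertex 0, every stabilization results in the unique stable configuration with chip (i) at vertex i−1 for 1 ≤ i ≤ n; in particular the chips end up sorted. -/

import Mathlib

/-- A labeled firing move on the one-way infinite path on `ℕ`:
either fire an interior vertex `v ≥ 1` (two chips at `v`, lesser label goes to `v-1`,
greater label to `v+1`), or fire vertex `0` (one chip at `0` moves to `1`). -/
def NStep (n : ℕ) (C D : ℕ → ℕ) : Prop :=
  (∃ a b v : ℕ, 1 ≤ a ∧ a < b ∧ b ≤ n ∧ 1 ≤ v ∧ C a = v ∧ C b = v ∧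
      D a = v - 1 ∧ D b = v + 1 ∧ ∀ k : ℕ, k ≠ a → k ≠ b → D k = C k) ∨
  (∃ a : ℕ, 1 ≤ a ∧ a ≤ n ∧ C a = 0 ∧ D a = 1 ∧ ∀ k : ℕ, k ≠ a → D k = C k)

def NReaches (n : ℕ) : (ℕ → ℕ) → (ℕ → ℕ) → Prop := Relation.ReflTransGen (NStep n)

/-- all chips at vertex `0` -/
def NDelta : ℕ → ℕ := fun _ => 0

/-- stable: no chip at vertex `0`, and no two chips share a vertex -/
def NStable (n : ℕ) (C : ℕ → ℕ) : Prop :=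
  (∀ a : ℕ, 1 ≤ a → a ≤ n → 1 ≤ C a) ∧
  (∀ a b : ℕ, 1 ≤ a → a < b → b ≤ n → C a ≠ C b)


/-- count of chips with label in `[lo, hi)` at position `≥ t` -/
def cnt (C : ℕ → ℕ) (lo hi t : ℕ) : ℕ := ((Finset.Ico lo hi).filter (fun k => t ≤ C k)).card

/-- the key invariant -/
def NInv (n : ℕ) (C : ℕ → ℕ) : Prop := ∀ c, 1 ≤ c → c ≤ n → C c + cnt C 1 c (C c) ≤ c

lemma cnt_le (C : ℕ → ℕ) (lo hi t : ℕ) : cnt C lo hi t ≤ hi - lo := by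
  calc cnt C lo hi t ≤ (Finset.Ico lo hi).card := Finset.card_filter_le _ _
  _ = hi - lo := Nat.card_Ico lo hi

lemma cnt_split (C : ℕ → ℕ) (t : ℕ) {lo m hi : ℕ} (h1 : lo ≤ m) (h2 : m ≤ hi) :
    cnt C lo hi t = cnt C lo m t + cnt C m hi t := by
  unfold cnt
  rw [← Finset.card_union_of_disjoint, ← Finset.filter_union,
    Finset.Ico_union_Ico_eq_Ico h1 h2]
  exact Finset.disjoint_filter_filter (Finset.Ico_disjoint_Ico_consecutive lo m hi)

lemma cnt_congr {C D : ℕ → ℕ} {lo hi t s : ℕ}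
    (h : ∀ k, lo ≤ k → k < hi → (t ≤ D k ↔ s ≤ C k)) :
    cnt D lo hi t = cnt C lo hi s := by
  unfold cnt
  apply Finset.card_nbij id
  · intro k hk
    simp only [Finset.mem_coe, Finset.mem_filter, Finset.mem_Ico, id] at *
    exact ⟨hk.1, (h k hk.1.1 hk.1.2).mp hk.2⟩
  · intro x hx y hy hxy; exact hxy
  · intro k hk
    simp only [Finset.mem_filter, Finset.mem_Ico, Set.mem_image, Finset.coe_filter] at *
    exact ⟨k, ⟨hk.1, (h k hk.1.1 hk.1.2).mpr hk.2⟩, rfl⟩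

lemma cnt_mono {C D : ℕ → ℕ} {lo hi t s : ℕ}
    (h : ∀ k, lo ≤ k → k < hi → (t ≤ D k → s ≤ C k)) :
    cnt D lo hi t ≤ cnt C lo hi s := by
  apply Finset.card_le_card
  intro k hk
  simp only [Finset.mem_filter, Finset.mem_Ico] at *
  exact ⟨hk.1, h k hk.1.1 hk.1.2 hk.2⟩

lemma cnt_succ_lt (C : ℕ → ℕ) {a b v : ℕ} (h1 : 1 ≤ a) (h2 : a < b) (hv : C a = v) :
    cnt C 1 b (v + 1) < cnt C 1 b v := by
  apply Finset.card_lt_card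
  rw [Finset.ssubset_def]
  constructor
  · intro k hk
    simp only [Finset.mem_filter] at *
    exact ⟨hk.1, le_trans (Nat.le_succ v) hk.2⟩
  · intro hsub
    have ha : a ∈ (Finset.Ico 1 b).filter (fun k => v ≤ C k) := by
      simp [Finset.mem_Ico, h1, h2, hv]
    have := hsub ha
    simp [Finset.mem_filter, hv] at this

lemma inv_step {n : ℕ} {C D : ℕ → ℕ} (hK : NInv n C) (hs : NStep n C D) : NInv n D := by
  intro c hc1 hcn
  rcases hs with ⟨a, b, v, ha1, hab, hbn, hv1, hCa, hCb, hDa, hDb, hoth⟩ |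
      ⟨a, ha1, han, hCa, hDa, hoth⟩
  · -- interior firing
    rcases eq_or_ne c a with rfl | hca
    · -- c = a
      rw [hDa]
      have hcnt : cnt D 1 c (v - 1) = cnt C 1 c (v - 1) := by
        apply cnt_congr
        intro k hk1 hk2
        rw [hoth k (by omega) (by omega)]
      rw [hcnt]
      rcases Nat.lt_or_ge v 2 with hv2 | hv2
      · have hv' : v = 1 := by omega
        have := cnt_le C 1 c (v - 1)
        omega
      · by_cases hM : ∃ q, 1 ≤ q ∧ q < c ∧ C q = v - 1
        · obtain ⟨q, hq1, hqc, hqv⟩ := hM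
          have hs1 : cnt C 1 c (v - 1) =
              cnt C 1 q (v - 1) + cnt C q (q + 1) (v - 1) + cnt C (q + 1) c (v - 1) := by
            rw [cnt_split C (v-1) hq1 (by omega : q ≤ c), cnt_split C (v-1) (by omega : q ≤ q+1) (by omega : q+1 ≤ c)]
            ring
          have hmid : cnt C q (q + 1) (v - 1) ≤ 1 := by
            have := cnt_le C q (q + 1) (v - 1); omega
          have htail : cnt C (q + 1) c (v - 1) ≤ c - (q + 1) := cnt_le C (q + 1) c (v - 1)
          have hKq := hK q hq1 (by omega)
          rw [hqv] at hKq
          omega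
        · push_neg at hM
          have heq : cnt C 1 c (v - 1) = cnt C 1 c v := by
            apply cnt_congr
            intro k hk1 hk2
            have := hM k hk1 hk2
            omega
          have hKa := hK c hc1 hcn
          rw [hCa] at hKa
          omega
    · rcases eq_or_ne c b with rfl | hcb
      · -- c = b
        rw [hDb]
        have hcnt : cnt D 1 c (v + 1) = cnt C 1 c (v + 1) := by
          apply cnt_congr
          intro k hk1 hk2
          rcases eq_or_ne k a with rfl | hka
          · rw [hDa, hCa]; omega
          · rw [hoth k hka (by omega)]
        have hlt : cnt C 1 c (v + 1) < cnt C 1 c v := cnt_succ_lt C ha1 hab hCa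
        have hKb := hK c (by omega) hcn
        rw [hCb] at hKb
        omega
      · -- c ≠ a, c ≠ b
        have hDc : D c = C c := hoth c hca hcb
        rw [hDc]
        rcases le_or_gt c b with hcb' | hbc
        · have hmono : cnt D 1 c (C c) ≤ cnt C 1 c (C c) := by
            apply cnt_mono
            intro k hk1 hk2 hk3
            rcases eq_or_ne k a with rfl | hka
            · rw [hDa] at hk3; rw [hCa]; omega
            · rw [← hoth k hka (by omega)]; exact hk3
          have := hK c hc1 hcn
          omega
        · rcases lt_trichotomy (C c) (v + 1) with h | h | h
          · have hmono : cnt D 1 c (C c) ≤ cnt C 1 c (C c) := by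
              apply cnt_mono
              intro k hk1 hk2 hk3
              rcases eq_or_ne k a with rfl | hka
              · rw [hDa] at hk3; rw [hCa]; omega
              · rcases eq_or_ne k b with rfl | hkb
                · rw [hCb]; omega
                · rw [← hoth k hka hkb]; exact hk3
            have := hK c hc1 hcn
            omega
          · rw [h]
            have hs1 : cnt D 1 c (v + 1) =
                cnt D 1 b (v + 1) + cnt D b (b + 1) (v + 1) + cnt D (b + 1) c (v + 1) := by
              rw [cnt_split D (v+1) (by omega : 1 ≤ b) (by omega : b ≤ c),
                cnt_split D (v+1) (by omega : b ≤ b+1) (by omega : b+1 ≤ c)]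
              ring
            have hmid : cnt D b (b + 1) (v + 1) ≤ 1 := by
              have := cnt_le D b (b + 1) (v + 1); omega
            have htail : cnt D (b + 1) c (v + 1) ≤ c - (b + 1) := cnt_le D (b + 1) c (v + 1)
            have hhead : cnt D 1 b (v + 1) = cnt C 1 b (v + 1) := by
              apply cnt_congr
              intro k hk1 hk2
              rcases eq_or_ne k a with rfl | hka
              · rw [hDa, hCa]; omega
              · rw [hoth k hka (by omega)]
            have hlt : cnt C 1 b (v + 1) < cnt C 1 b v := cnt_succ_lt C ha1 hab hCa
            have hKb := hK b (by omega) hbn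
            rw [hCb] at hKb
            omega
          · have hmono : cnt D 1 c (C c) ≤ cnt C 1 c (C c) := by
              apply cnt_mono
              intro k hk1 hk2 hk3
              rcases eq_or_ne k a with rfl | hka
              · rw [hDa] at hk3; rw [hCa]; omega
              · rcases eq_or_ne k b with rfl | hkb
                · rw [hDb] at hk3; omega
                · rw [← hoth k hka hkb]; exact hk3
            have := hK c hc1 hcn
            omega
  · -- firing at 0
    rcases Nat.lt_or_ge (D c) 2 with h2 | h2
    · have := cnt_le D 1 c (D c)
      omega
    · have hca : c ≠ a := by
        intro h; rw [h, hDa] at h2; omega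
      have hDc : D c = C c := hoth c hca
      rw [hDc]
      have hcnt : cnt D 1 c (C c) = cnt C 1 c (C c) := by
        apply cnt_congr
        intro k hk1 hk2
        rcases eq_or_ne k a with rfl | hka
        · rw [hDa, hCa]; rw [hDc] at h2; omega
        · rw [hoth k hka]
      have := hK c hc1 hcn
      omega

lemma inv_delta (n : ℕ) : NInv n NDelta := by
  intro c hc1 hcn
  have := cnt_le NDelta 1 c (NDelta c)
  simp only [NDelta] at this ⊢
  omega

lemma inv_reaches {n : ℕ} {C D : ℕ → ℕ} (h : NReaches n C D) (hC : NInv n C) : NInv n D := by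
  induction h with
  | refl => exact hC
  | tail _ hstep ih => exact inv_step ih hstep

theorem stmt_18 (n : ℕ) (D : ℕ → ℕ) (h : NReaches n NDelta D) (hD : NStable n D) :
    ∀ i : ℕ, 1 ≤ i → i ≤ n → D i = i := by
  have hI : NInv n D := inv_reaches h (inv_delta n)
  intro i
  induction i using Nat.strong_induction_on with
  | _ i IH =>
    intro h1 h2
    have hle : D i ≤ i := by
      have := hI i h1 h2
      omega
    by_contra hne
    have hlt : D i < i := lt_of_le_of_ne hle hne
    have h1' : 1 ≤ D i := hD.1 i h1 h2
    have heq : D (D i) = D i := IH (D i) hlt h1' (by omega)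
    exact hD.2 (D i) i h1' hlt h2 heq
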